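/- For every real constant τ ≥ 4/ln 2 there exists s₀ = s₀(τ) such that for every integer s ≥ s₀ there exists an (N, s+3, 2s+1)-suitable core with N = (s+3)(s−1) + ⌈τ·ln s⌉. -/

import Mathlib

set_option maxHeartbeats 1000000
set_option linter.unusedVariables false
open Finset Equiv

namespace SC



variable {m : ℕ}

def p0 : Fin (m+3) := ⟨0, by omega⟩
def p1 : Fin (m+3) := ⟨1, by omega⟩
def p2 : Fin (m+3) := ⟨2, by omega⟩

lemma p01 : (p0 : Fin (m+3)) ≠ p1 := by simp [p0, p1, Fin.ext_iff]
lemma p02 : (p0 : Fin (m+3)) ≠ p2 := by simp [p0, p2, Fin.ext_iff]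
lemma p12 : (p1 : Fin (m+3)) ≠ p2 := by simp [p1, p2, Fin.ext_iff]

lemma exists_perm {a b c : Fin (m+3)} (hab : a ≠ b) (hac : a ≠ c) (hbc : b ≠ c) :
    ∃ π : Equiv.Perm (Fin (m+3)), π p0 = a ∧ π p1 = b ∧ π p2 = c := by
  set e1 := Equiv.swap p0 a with he1
  have e1p0 : e1 p0 = a := Equiv.swap_apply_left _ _
  set b1 := e1.symm b with hb1
  have hb1p0 : b1 ≠ p0 := by
    intro h
    exact hab (by rw [← e1p0, ← h, hb1, Equiv.apply_symm_apply])
  set e2 : Equiv.Perm (Fin (m+3)) := (Equiv.swap p1 b1).trans e1 with he2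
  have e2p0 : e2 p0 = a := by
    rw [he2, Equiv.trans_apply, Equiv.swap_apply_of_ne_of_ne p01 (Ne.symm hb1p0), e1p0]
  have e2p1 : e2 p1 = b := by
    rw [he2, Equiv.trans_apply, Equiv.swap_apply_left, hb1, Equiv.apply_symm_apply]
  set c2 := e2.symm c with hc2
  have hc2p0 : c2 ≠ p0 := fun h => hac (by rw [← e2p0, ← h, hc2, Equiv.apply_symm_apply])
  have hc2p1 : c2 ≠ p1 := fun h => hbc (by rw [← e2p1, ← h, hc2, Equiv.apply_symm_apply])
  refine ⟨(Equiv.swap p2 c2).trans e2, ?_, ?_, ?_⟩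
  · rw [Equiv.trans_apply, Equiv.swap_apply_of_ne_of_ne p02 (Ne.symm hc2p0), e2p0]
  · rw [Equiv.trans_apply, Equiv.swap_apply_of_ne_of_ne p12 (Ne.symm hc2p1), e2p1]
  · rw [Equiv.trans_apply, Equiv.swap_apply_left, hc2, Equiv.apply_symm_apply]

noncomputable def mkRow (a b c : Fin (m+3)) (hab : a ≠ b) (hac : a ≠ c) (hbc : b ≠ c) :
    Equiv.Perm (Fin (m+3)) := (exists_perm hab hac hbc).choose

lemma mkRow_p0 {a b c : Fin (m+3)} (hab : a ≠ b) (hac : a ≠ c) (hbc : b ≠ c) :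
    mkRow a b c hab hac hbc p0 = a := (exists_perm hab hac hbc).choose_spec.1
lemma mkRow_p1 {a b c : Fin (m+3)} (hab : a ≠ b) (hac : a ≠ c) (hbc : b ≠ c) :
    mkRow a b c hab hac hbc p1 = b := (exists_perm hab hac hbc).choose_spec.2.1
lemma mkRow_p2 {a b c : Fin (m+3)} (hab : a ≠ b) (hac : a ≠ c) (hbc : b ≠ c) :
    mkRow a b c hab hac hbc p2 = c := (exists_perm hab hac hbc).choose_spec.2.2

/-- goodness via head -/
lemma good_head {π : Equiv.Perm (Fin (m+3))} {σ τ : Fin (m+3)}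
    (h0 : π p0 = σ) (hτ : τ ≠ σ) : π.symm σ < π.symm τ := by
  have hs : π.symm σ = p0 := by rw [← h0, Equiv.symm_apply_apply]
  rw [hs]
  have : π.symm τ ≠ p0 := fun h => hτ (by rw [← h0, ← h, Equiv.apply_symm_apply])
  rw [Fin.lt_def]
  have := Fin.val_ne_of_ne this
  simp only [p0] at this ⊢
  omega

lemma good_second {π : Equiv.Perm (Fin (m+3))} {σ τ z : Fin (m+3)}
    (h0 : π p0 = z) (h1 : π p1 = σ) (hτz : τ ≠ z) (hτσ : τ ≠ σ) :
    π.symm σ < π.symm τ := by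
  have hs : π.symm σ = p1 := by rw [← h1, Equiv.symm_apply_apply]
  rw [hs]
  have n0 : π.symm τ ≠ p0 := fun h => hτz (by rw [← h0, ← h, Equiv.apply_symm_apply])
  have n1 : π.symm τ ≠ p1 := fun h => hτσ (by rw [← h1, ← h, Equiv.apply_symm_apply])
  rw [Fin.lt_def]
  have h0' := Fin.val_ne_of_ne n0
  have h1' := Fin.val_ne_of_ne n1
  simp only [p0, p1] at h0' h1' ⊢
  omega

lemma good_third {π : Equiv.Perm (Fin (m+3))} {σ τ x y : Fin (m+3)}
    (h0 : π p0 = x) (h1 : π p1 = y) (h2 : π p2 = σ)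
    (hτx : τ ≠ x) (hτy : τ ≠ y) (hτσ : τ ≠ σ) :
    π.symm σ < π.symm τ := by
  have hs : π.symm σ = p2 := by rw [← h2, Equiv.symm_apply_apply]
  rw [hs]
  have n0 : π.symm τ ≠ p0 := fun h => hτx (by rw [← h0, ← h, Equiv.apply_symm_apply])
  have n1 : π.symm τ ≠ p1 := fun h => hτy (by rw [← h1, ← h, Equiv.apply_symm_apply])
  have n2 : π.symm τ ≠ p2 := fun h => hτσ (by rw [← h2, ← h, Equiv.apply_symm_apply])
  rw [Fin.lt_def]
  have h0' := Fin.val_ne_of_ne n0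
  have h1' := Fin.val_ne_of_ne n1
  have h2' := Fin.val_ne_of_ne n2
  simp only [p0, p1, p2] at h0' h1' h2' ⊢
  omega


section defs

variable (s R : ℕ)

def ν (z : Fin s) : Fin (s+3) := ⟨z.1, by have := z.2; omega⟩
def ρ (i : Fin 3) : Fin (s+3) := ⟨s + i.1, by have := i.2; omega⟩

lemma ν_ne {x y : Fin s} (h : x ≠ y) : ν s x ≠ ν s y := by
  intro hc
  exact h (Fin.ext (by simpa [ν, Fin.ext_iff] using hc))

lemma ν_ne_ρ (x : Fin s) (i : Fin 3) : ν s x ≠ ρ s i := by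
  have := x.2
  simp [ν, ρ, Fin.ext_iff]; omega

lemma ρ_ne {i j : Fin 3} (h : i ≠ j) : ρ s i ≠ ρ s j := by
  intro hc
  exact h (Fin.ext (by simpa [ρ, Fin.ext_iff] using hc))

lemma fin3_ne1 : ∀ i : Fin 3, i ≠ i + 1 := by decide
lemma fin3_ne2 : ∀ i : Fin 3, i ≠ i + 2 := by decide
lemma fin3_ne12 : ∀ i : Fin 3, i + 1 ≠ i + 2 := by decide

def g (f : Fin s → Fin s → Fin 3) (x y : Fin s) : Fin 3 :=
  if x < y then f x y + 1 else f y x + 2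

def skipFn (a r : ℕ) : ℕ := if r < a then r else r + 1

lemma skipFn_ne (a r : ℕ) : skipFn a r ≠ a := by
  unfold skipFn; split <;> omega

def unskip (x y : Fin s) : ℕ := if y.1 < x.1 then y.1 else y.1 - 1

end defs

section rowperm

variable (s R : ℕ)

lemma Nsplit : (s+3)*(s-1) + R = s*(s-1) + 3*(s-1) + R := by
  rw [add_mul]

lemma div_lt (hs : 2 ≤ s) {v : ℕ} (h1 : v < s*(s-1)) : v / (s-1) < s := by
  have h0 : 0 < s - 1 := by omega
  rw [Nat.div_lt_iff_lt_mul h0]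
  omega

lemma mod_lt' (hs : 2 ≤ s) {v : ℕ} : v % (s-1) < s - 1 := Nat.mod_lt _ (by omega)

lemma skip_lt (hs : 2 ≤ s) {v : ℕ} (h1 : v < s*(s-1)) : skipFn (v/(s-1)) (v % (s-1)) < s := by
  have := mod_lt' s hs (v := v)
  unfold skipFn; split <;> omega

noncomputable def rowPerm (hs : 2 ≤ s) (f : Fin s → Fin s → Fin 3)
    (v : Fin ((s+3)*(s-1)+R)) : Equiv.Perm (Fin (s+3)) :=
  if h1 : v.1 < s*(s-1) then
    mkRow (ν s ⟨v.1/(s-1), div_lt s hs h1⟩)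
          (ν s ⟨skipFn (v.1/(s-1)) (v.1 % (s-1)), skip_lt s hs h1⟩)
          (ρ s (g s f ⟨v.1/(s-1), div_lt s hs h1⟩ ⟨skipFn (v.1/(s-1)) (v.1 % (s-1)), skip_lt s hs h1⟩))
          (ν_ne s (by simp [Fin.ext_iff]; exact (skipFn_ne _ _).symm))
          (ν_ne_ρ s _ _) (ν_ne_ρ s _ _)
  else if h2 : v.1 < s*(s-1) + 3*s then
    mkRow (ρ s ⟨(v.1 - s*(s-1))/s, by
            have h0 : 0 < s := by omega
            rw [Nat.div_lt_iff_lt_mul h0]; omega⟩)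
          (ν s ⟨(v.1 - s*(s-1)) % s, Nat.mod_lt _ (by omega)⟩)
          (ρ s (⟨(v.1 - s*(s-1))/s, by
            have h0 : 0 < s := by omega
            rw [Nat.div_lt_iff_lt_mul h0]; omega⟩ + 1))
          ((ν_ne_ρ s _ _).symm) (ρ_ne s (fin3_ne1 _)) (ν_ne_ρ s _ _)
  else
    mkRow (ρ s ⟨(v.1 - (s*(s-1)+3*s)) % 3, Nat.mod_lt _ (by omega)⟩)
          (ρ s (⟨(v.1 - (s*(s-1)+3*s)) % 3, Nat.mod_lt _ (by omega)⟩ + 1))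
          (ρ s (⟨(v.1 - (s*(s-1)+3*s)) % 3, Nat.mod_lt _ (by omega)⟩ + 2))
          (ρ_ne s (fin3_ne1 _)) (ρ_ne s (fin3_ne2 _)) (ρ_ne s (fin3_ne12 _))

lemma encA_val_lt (hs : 2 ≤ s) (x y : Fin s) :
    x.1 * (s-1) + unskip s x y < s * (s-1) := by
  obtain ⟨n, rfl⟩ : ∃ n, s = n + 2 := ⟨s - 2, by omega⟩
  have he : n + 2 - 1 = n + 1 := rfl
  rw [he]
  have hx : x.1 ≤ n + 1 := by have := x.2; omega
  have hy : unskip (n+2) x y ≤ n := by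
    have := y.2; have := x.2
    unfold unskip; split <;> omega
  have h1 : x.1 * (n+1) ≤ (n+1) * (n+1) := Nat.mul_le_mul_right _ hx
  have h2 : (n+2) * (n+1) = (n+1) * (n+1) + (n+1) := by ring
  omega

def encA (hs : 2 ≤ s) (x y : Fin s) : Fin ((s+3)*(s-1)+R) :=
  ⟨x.1 * (s-1) + unskip s x y, by
    have := encA_val_lt s hs x y
    have := Nsplit s R
    omega⟩

def encB (hs : 2 ≤ s) (hR : 9 ≤ R) (i : Fin 3) (y : Fin s) : Fin ((s+3)*(s-1)+R) :=
  ⟨s*(s-1) + (i.1 * s + y.1), by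
    have hi : i.1 ≤ 2 := by have := i.2; omega
    have h1 : i.1 * s ≤ 2 * s := Nat.mul_le_mul_right _ hi
    have := y.2
    have := Nsplit s R
    omega⟩

def encC (hs : 2 ≤ s) (hR : 9 ≤ R) (j : ℕ) : Fin ((s+3)*(s-1)+R) :=
  ⟨s*(s-1) + 3*s + j % (R - 3), by
    have : j % (R-3) < R - 3 := Nat.mod_lt _ (by omega)
    have := Nsplit s R
    omega⟩

lemma encA_lt (hs : 2 ≤ s) (x y : Fin s) : (encA s R hs x y).1 < s*(s-1) :=
  encA_val_lt s hs x y

lemma encB_range (hs : 2 ≤ s) (hR : 9 ≤ R) (i : Fin 3) (y : Fin s) :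
    s*(s-1) ≤ (encB s R hs hR i y).1 ∧ (encB s R hs hR i y).1 < s*(s-1)+3*s := by
  constructor
  · simp [encB]
  · have hi : i.1 ≤ 2 := by have := i.2; omega
    have h1 : i.1 * s ≤ 2 * s := Nat.mul_le_mul_right _ hi
    have := y.2
    simp only [encB]
    omega

lemma encC_range (hs : 2 ≤ s) (hR : 9 ≤ R) (j : ℕ) :
    s*(s-1)+3*s ≤ (encC s R hs hR j).1 := by simp [encC]

/-- decode region 1 -/
lemma rowPerm_encA (hs : 2 ≤ s) (f : Fin s → Fin s → Fin 3) (x y : Fin s) (hxy : x ≠ y) :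
    (rowPerm s R hs f (encA s R hs x y)) p0 = ν s x ∧
    (rowPerm s R hs f (encA s R hs x y)) p1 = ν s y ∧
    (rowPerm s R hs f (encA s R hs x y)) p2 = ρ s (g s f x y) := by
  have h0 : 0 < s - 1 := by omega
  have hu : unskip s x y < s - 1 := by
    have := x.2; have := y.2
    have hne : x.1 ≠ y.1 := fun h => hxy (Fin.ext h)
    unfold unskip; split <;> omega
  have hdiv : (encA s R hs x y).1 / (s-1) = x.1 := by
    show (x.1 * (s-1) + unskip s x y) / (s-1) = x.1
    rw [Nat.mul_comm x.1, Nat.mul_add_div h0, Nat.div_eq_of_lt hu, Nat.add_zero]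
  have hmod : (encA s R hs x y).1 % (s-1) = unskip s x y := by
    show (x.1 * (s-1) + unskip s x y) % (s-1) = unskip s x y
    rw [Nat.mul_comm x.1, Nat.mul_add_mod, Nat.mod_eq_of_lt hu]
  have hskip : skipFn ((encA s R hs x y).1/(s-1)) ((encA s R hs x y).1 % (s-1)) = y.1 := by
    rw [hdiv, hmod]
    have hne : x.1 ≠ y.1 := fun h => hxy (Fin.ext h)
    unfold skipFn unskip
    rcases lt_trichotomy y.1 x.1 with h | h | h
    · simp only [if_pos h]
    · exact absurd h hne.symm
    · have h' : ¬ (y.1 < x.1) := by omega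
      simp only [if_neg h']
      rw [if_neg (by omega : ¬ (y.1 - 1 < x.1))]
      omega
  have hlt : (encA s R hs x y).1 < s * (s-1) := encA_lt s R hs x y
  have hxx : (⟨(encA s R hs x y).1/(s-1), div_lt s hs hlt⟩ : Fin s) = x := Fin.ext hdiv
  have hyy : (⟨skipFn ((encA s R hs x y).1/(s-1)) ((encA s R hs x y).1 % (s-1)),
      skip_lt s hs hlt⟩ : Fin s) = y := Fin.ext hskip
  unfold rowPerm
  rw [dif_pos hlt]
  rw [mkRow_p0, mkRow_p1, mkRow_p2]
  refine ⟨by rw [hxx], by rw [hyy], by rw [hxx, hyy]⟩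

/-- decode region 2 -/
lemma rowPerm_encB (hs : 2 ≤ s) (hR : 9 ≤ R) (f : Fin s → Fin s → Fin 3) (i : Fin 3) (y : Fin s) :
    (rowPerm s R hs f (encB s R hs hR i y)) p0 = ρ s i ∧
    (rowPerm s R hs f (encB s R hs hR i y)) p1 = ν s y := by
  have hs0 : 0 < s := by omega
  have hnl : ¬ ((encB s R hs hR i y).1 < s*(s-1)) := by
    have := (encB_range s R hs hR i y).1
    omega
  have hl2 : (encB s R hs hR i y).1 < s*(s-1) + 3*s := (encB_range s R hs hR i y).2
  have hd : (encB s R hs hR i y).1 - s*(s-1) = i.1 * s + y.1 := by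
    show s*(s-1) + (i.1*s + y.1) - s*(s-1) = i.1*s + y.1
    omega
  have hdiv : ((encB s R hs hR i y).1 - s*(s-1)) / s = i.1 := by
    rw [hd, Nat.mul_comm i.1, Nat.mul_add_div hs0, Nat.div_eq_of_lt y.2, Nat.add_zero]
  have hmod : ((encB s R hs hR i y).1 - s*(s-1)) % s = y.1 := by
    rw [hd, Nat.mul_comm i.1, Nat.mul_add_mod, Nat.mod_eq_of_lt y.2]
  have hii : (⟨((encB s R hs hR i y).1 - s*(s-1))/s, by
      rw [Nat.div_lt_iff_lt_mul hs0]; omega⟩ : Fin 3) = i := Fin.ext hdiv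
  have hyy : (⟨((encB s R hs hR i y).1 - s*(s-1)) % s, Nat.mod_lt _ (by omega)⟩ : Fin s) = y :=
    Fin.ext hmod
  unfold rowPerm
  rw [dif_neg hnl, dif_pos hl2]
  rw [mkRow_p0, mkRow_p1]
  exact ⟨by rw [hii], by rw [hyy]⟩

/-- decode region 3 -/
lemma rowPerm_encC (hs : 2 ≤ s) (hR : 9 ≤ R) (f : Fin s → Fin s → Fin 3) (j : ℕ) (hj : j < R - 3) :
    (rowPerm s R hs f (encC s R hs hR j)) p0 = ρ s ⟨j % 3, Nat.mod_lt _ (by omega)⟩ := by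
  have hnl : ¬ ((encC s R hs hR j).1 < s*(s-1)) := by
    have := encC_range s R hs hR j
    omega
  have hnl2 : ¬ ((encC s R hs hR j).1 < s*(s-1) + 3*s) := by
    show ¬ (s*(s-1) + 3*s + j % (R-3) < s*(s-1)+3*s)
    omega
  have hd : (encC s R hs hR j).1 - (s*(s-1)+3*s) = j := by
    show s*(s-1) + 3*s + j % (R-3) - (s*(s-1)+3*s) = j
    rw [Nat.mod_eq_of_lt hj]
    omega
  unfold rowPerm
  rw [dif_neg hnl, dif_neg hnl2]
  rw [mkRow_p0]
  exact congrArg (ρ s) (Fin.ext (by simp [hd]))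

lemma unskip_lt (hs : 2 ≤ s) (x y : Fin s) : unskip s x y < s - 1 := by
  have := x.2; have := y.2
  unfold unskip; split <;> omega

lemma encA_div (hs : 2 ≤ s) (x y : Fin s) : (encA s R hs x y).1 / (s-1) = x.1 := by
  have h0 : 0 < s - 1 := by omega
  show (x.1 * (s-1) + unskip s x y) / (s-1) = x.1
  rw [Nat.mul_comm x.1, Nat.mul_add_div h0, Nat.div_eq_of_lt (unskip_lt s hs x y), Nat.add_zero]

lemma encA_inj (hs : 2 ≤ s) {x₁ y₁ x₂ y₂ : Fin s} (h₁ : y₁ ≠ x₁) (h₂ : y₂ ≠ x₂)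
    (h : encA s R hs x₁ y₁ = encA s R hs x₂ y₂) : x₁ = x₂ ∧ y₁ = y₂ := by
  have hval : x₁.1 * (s-1) + unskip s x₁ y₁ = x₂.1 * (s-1) + unskip s x₂ y₂ := by
    have := congrArg (fun t : Fin ((s+3)*(s-1)+R) => t.1) h
    simpa [encA] using this
  have hx : x₁.1 = x₂.1 := by
    have e1 := encA_div s R hs x₁ y₁
    have e2 := encA_div s R hs x₂ y₂
    rw [h] at e1
    rw [← e1, e2]
  have hxx : x₁ = x₂ := Fin.ext hx
  have hu : unskip s x₁ y₁ = unskip s x₂ y₂ := by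
    rw [hx] at hval; omega
  refine ⟨hxx, ?_⟩
  have hy1 : y₁.1 ≠ x₁.1 := fun hh => h₁ (Fin.ext hh)
  have hy2 : y₂.1 ≠ x₂.1 := fun hh => h₂ (Fin.ext hh)
  apply Fin.ext
  unfold unskip at hu
  rw [hx] at *
  split_ifs at hu <;> omega

lemma encB_inj (hs : 2 ≤ s) (hR : 9 ≤ R) {i₁ i₂ : Fin 3} {y₁ y₂ : Fin s}
    (h : encB s R hs hR i₁ y₁ = encB s R hs hR i₂ y₂) : i₁ = i₂ ∧ y₁ = y₂ := by
  have hs0 : 0 < s := by omega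
  have hval : i₁.1 * s + y₁.1 = i₂.1 * s + y₂.1 := by
    have := congrArg (fun t : Fin ((s+3)*(s-1)+R) => t.1) h
    simp only [encB] at this
    omega
  have hi : i₁.1 = i₂.1 := by
    have e1 : (i₁.1 * s + y₁.1) / s = i₁.1 := by
      rw [Nat.mul_comm i₁.1, Nat.mul_add_div hs0, Nat.div_eq_of_lt y₁.2, Nat.add_zero]
    have e2 : (i₂.1 * s + y₂.1) / s = i₂.1 := by
      rw [Nat.mul_comm i₂.1, Nat.mul_add_div hs0, Nat.div_eq_of_lt y₂.2, Nat.add_zero]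
    rw [hval] at e1
    rw [← e1, e2]
  constructor
  · exact Fin.ext hi
  · apply Fin.ext
    rw [hi] at hval
    omega

lemma ν_injective : Function.Injective (ν s) := by
  intro a b h
  exact Fin.ext (by simpa [ν, Fin.ext_iff] using h)

lemma ρ_injective : Function.Injective (ρ s) := by
  intro a b h
  exact Fin.ext (by simpa [ρ, Fin.ext_iff] using h)

lemma fin3_cover : ∀ u w : Fin 3, w ≠ u → u + 1 = w ∨ u + 2 = w := by decide

lemma g_lt (f : Fin s → Fin s → Fin 3) {x y : Fin s} (h : x < y) :
    g s f x y = f x y + 1 := by unfold g; rw [if_pos h]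

lemma g_gt (f : Fin s → Fin s → Fin 3) {x y : Fin s} (h : x < y) :
    g s f y x = f x y + 2 := by
  unfold g
  rw [if_neg (by exact fun hc => absurd h (not_lt.mpr (le_of_lt hc)))]

lemma main_normal (hs : 2 ≤ s) (hR : 9 ≤ R) (f : Fin s → Fin s → Fin 3)
    (T : Finset (Fin (s+3))) (x : Fin s) (hσT : ν s x ∉ T) :
    2*s+1 ≤ (univ.filter (fun v : Fin ((s+3)*(s-1)+R) =>
      ∀ τ ∈ T, (rowPerm s R hs f v).symm (ν s x) < (rowPerm s R hs f v).symm τ)).card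
      + T.card := by
  classical
  set σ := ν s x with hσ
  set G := univ.filter (fun v : Fin ((s+3)*(s-1)+R) =>
      ∀ τ ∈ T, (rowPerm s R hs f v).symm σ < (rowPerm s R hs f v).symm τ) with hG
  set A1 := (univ.erase x).image (fun y => encA s R hs x y) with hA1
  set A2 := ((univ.erase x).filter (fun z => ν s z ∉ T)).image (fun z => encA s R hs z x) with hA2
  set A3 := (univ.filter (fun j : Fin 3 => ρ s j ∉ T)).image (fun j => encB s R hs hR j x) with hA3
  have hsubG : A1 ∪ A2 ∪ A3 ⊆ G := by
    intro v hv
    rw [Finset.mem_union, Finset.mem_union] at hv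
    rw [hG, Finset.mem_filter]
    refine ⟨Finset.mem_univ _, ?_⟩
    rcases hv with (hv | hv) | hv
    · obtain ⟨y, hy, rfl⟩ := Finset.mem_image.mp hv
      have hyx : y ≠ x := (Finset.mem_erase.mp hy).1
      obtain ⟨e0, e1, e2⟩ := rowPerm_encA s R hs f x y (Ne.symm hyx)
      intro τ hτ
      exact good_head e0 (fun hc => hσT (hc ▸ hτ))
    · obtain ⟨z, hz, rfl⟩ := Finset.mem_image.mp hv
      rw [Finset.mem_filter, Finset.mem_erase] at hz
      obtain ⟨e0, e1, e2⟩ := rowPerm_encA s R hs f z x hz.1.1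
      intro τ hτ
      exact good_second e0 e1 (fun hc => hz.2 (hc ▸ hτ)) (fun hc => hσT (hc ▸ hτ))
    · obtain ⟨j, hj, rfl⟩ := Finset.mem_image.mp hv
      rw [Finset.mem_filter] at hj
      obtain ⟨e0, e1⟩ := rowPerm_encB s R hs hR f j x
      intro τ hτ
      exact good_second e0 e1 (fun hc => hj.2 (hc ▸ hτ)) (fun hc => hσT (hc ▸ hτ))
  have hcard1 : A1.card = s - 1 := by
    rw [hA1, Finset.card_image_of_injOn, Finset.card_erase_of_mem (Finset.mem_univ _),
      Finset.card_univ, Fintype.card_fin]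
    intro y₁ h₁ y₂ h₂ h
    simp only [Finset.coe_erase, Set.mem_diff] at h₁ h₂
    have hy₁ : y₁ ≠ x := by simpa using h₁.2
    have hy₂ : y₂ ≠ x := by simpa using h₂.2
    exact (encA_inj s R hs hy₁ hy₂ h).2
  have hcard2 : A2.card = ((univ.erase x).filter (fun z => ν s z ∉ T)).card := by
    rw [hA2, Finset.card_image_of_injOn]
    intro z₁ h₁ z₂ h₂ h
    simp only [Finset.coe_filter, Set.mem_setOf_eq, Finset.mem_erase] at h₁ h₂
    exact (encA_inj s R hs (Ne.symm h₁.1.1) (Ne.symm h₂.1.1) h).1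
  have hcard3 : A3.card = (univ.filter (fun j : Fin 3 => ρ s j ∉ T)).card := by
    rw [hA3, Finset.card_image_of_injOn]
    intro j₁ h₁ j₂ h₂ h
    exact (encB_inj s R hs hR h).1
  have hd12 : Disjoint A1 A2 := by
    rw [Finset.disjoint_left]
    intro v hv1 hv2
    obtain ⟨y, hy, he1⟩ := Finset.mem_image.mp hv1
    obtain ⟨z, hz, he2⟩ := Finset.mem_image.mp hv2
    rw [Finset.mem_filter, Finset.mem_erase] at hz
    have hyx : y ≠ x := (Finset.mem_erase.mp hy).1
    have := (encA_inj s R hs hyx (Ne.symm hz.1.1) (he1.trans he2.symm)).1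
    exact hz.1.1 this.symm
  have hd123 : Disjoint (A1 ∪ A2) A3 := by
    rw [Finset.disjoint_left]
    intro v hv1 hv3
    obtain ⟨j, hj, he3⟩ := Finset.mem_image.mp hv3
    have h3 : s*(s-1) ≤ v.1 := by
      rw [← he3]; exact (encB_range s R hs hR j x).1
    rw [Finset.mem_union] at hv1
    rcases hv1 with hv | hv <;>
    · obtain ⟨z, hz, hez⟩ := Finset.mem_image.mp hv
      have := encA_lt s R hs (y := x) (x := z)
      have h4 : v.1 < s*(s-1) := by
        rw [← hez]; first
          | exact encA_lt s R hs x z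
          | exact encA_lt s R hs z x
      omega
  have hGcard : (s-1) + (((univ.erase x).filter (fun z => ν s z ∉ T)).card
      + (univ.filter (fun j : Fin 3 => ρ s j ∉ T)).card) ≤ G.card := by
    calc (s-1) + (((univ.erase x).filter (fun z => ν s z ∉ T)).card
          + (univ.filter (fun j : Fin 3 => ρ s j ∉ T)).card)
        = (A1 ∪ A2 ∪ A3).card := by
          rw [Finset.card_union_of_disjoint hd123, Finset.card_union_of_disjoint hd12,
            hcard1, hcard2, hcard3]
          omega
      _ ≤ G.card := Finset.card_le_card hsubG
  -- complement counts
  have hcn : ((univ.erase x).filter (fun z => ν s z ∉ T)).card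
      + ((univ.erase x).filter (fun z => ν s z ∈ T)).card = s - 1 := by
    rw [add_comm, Finset.card_filter_add_card_filter_not,
      Finset.card_erase_of_mem (Finset.mem_univ _), Finset.card_univ, Fintype.card_fin]
  have hcr : (univ.filter (fun j : Fin 3 => ρ s j ∉ T)).card
      + (univ.filter (fun j : Fin 3 => ρ s j ∈ T)).card = 3 := by
    rw [add_comm, Finset.card_filter_add_card_filter_not, Finset.card_univ,
      Fintype.card_fin]
  -- T bound
  have hTb : ((univ.erase x).filter (fun z => ν s z ∈ T)).card
      + (univ.filter (fun j : Fin 3 => ρ s j ∈ T)).card ≤ T.card := by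
    have h1 : (((univ.erase x).filter (fun z => ν s z ∈ T)).image (ν s)
        ∪ (univ.filter (fun j : Fin 3 => ρ s j ∈ T)).image (ρ s)) ⊆ T := by
      intro τ hτ
      rw [Finset.mem_union] at hτ
      rcases hτ with h | h <;>
      · obtain ⟨z, hz, rfl⟩ := Finset.mem_image.mp h
        exact (Finset.mem_filter.mp hz).2
    have h2 : Disjoint (((univ.erase x).filter (fun z => ν s z ∈ T)).image (ν s))
        ((univ.filter (fun j : Fin 3 => ρ s j ∈ T)).image (ρ s)) := by
      rw [Finset.disjoint_left]
      intro τ ha hb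
      obtain ⟨z, _, hez⟩ := Finset.mem_image.mp ha
      obtain ⟨j, _, hej⟩ := Finset.mem_image.mp hb
      have := hez.trans hej.symm
      have hz2 := z.2
      simp only [ν, ρ, Fin.ext_iff] at this
      omega
    calc ((univ.erase x).filter (fun z => ν s z ∈ T)).card
          + (univ.filter (fun j : Fin 3 => ρ s j ∈ T)).card
        = (((univ.erase x).filter (fun z => ν s z ∈ T)).image (ν s)).card
          + ((univ.filter (fun j : Fin 3 => ρ s j ∈ T)).image (ρ s)).card := by
          rw [Finset.card_image_of_injective _ (ν_injective s),
            Finset.card_image_of_injective _ (ρ_injective s)]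
      _ = (((univ.erase x).filter (fun z => ν s z ∈ T)).image (ν s)
          ∪ (univ.filter (fun j : Fin 3 => ρ s j ∈ T)).image (ρ s)).card :=
          (Finset.card_union_of_disjoint h2).symm
      _ ≤ T.card := Finset.card_le_card h1
  omega


lemma forest {n : ℕ} (f : Fin n → Fin n → Fin 3) (i : Fin 3) (μ : ℕ)
    (V : Finset (Fin n))
    (h : ∀ S ⊆ V, (∀ a ∈ S, ∀ b ∈ S, a < b → f a b = i) → S.card ≤ μ) :
    ∃ Ed : Finset (Fin n × Fin n),
      (∀ p ∈ Ed, p.1 ∈ V ∧ p.2 ∈ V ∧ p.1 < p.2 ∧ f p.1 p.2 ≠ i) ∧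
      V.card ≤ Ed.card + μ := by
  classical
  induction V using Finset.strongInduction with
  | _ V ih =>
    by_cases hc : V.card ≤ μ
    · exact ⟨∅, by simp, by simpa using hc⟩
    · have hnm : ¬ (∀ a ∈ V, ∀ b ∈ V, a < b → f a b = i) := by
        intro hmono
        exact hc (h V (Finset.Subset.refl V) hmono)
      push_neg at hnm
      obtain ⟨a, ha, b, hb, hab, hfab⟩ := hnm
      have hsub : V.erase a ⊂ V := Finset.erase_ssubset ha
      obtain ⟨Ed', hEd', hcard'⟩ := ih (V.erase a) hsub
        (fun S hS hmono => h S (hS.trans (Finset.erase_subset _ _)) hmono)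
      refine ⟨insert (a, b) Ed', ?_, ?_⟩
      · intro p hp
        rcases Finset.mem_insert.mp hp with rfl | hp'
        · exact ⟨ha, hb, hab, hfab⟩
        · obtain ⟨h1, h2, h3, h4⟩ := hEd' p hp'
          exact ⟨Finset.erase_subset _ _ h1, Finset.erase_subset _ _ h2, h3, h4⟩
      · have hnotin : (a, b) ∉ Ed' := by
          intro hmem
          exact (Finset.notMem_erase a V) (hEd' _ hmem).1
        rw [Finset.card_insert_of_notMem hnotin]
        have : V.card = (V.erase a).card + 1 := by
          rw [Finset.card_erase_of_mem ha]
          have : 0 < V.card := Finset.card_pos.mpr ⟨a, ha⟩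
          omega
        omega


lemma main_rich (hs : 2 ≤ s) (hR : 9 ≤ R) (f : Fin s → Fin s → Fin 3) (q : ℕ)
    (hq : q = (R-3)/3)
    (hf : ∀ (c : Fin 3) (S : Finset (Fin s)),
      (∀ a ∈ S, ∀ b ∈ S, a < b → f a b = c) → S.card < q)
    (T : Finset (Fin (s+3))) (i : Fin 3) (hσT : ρ s i ∉ T) :
    2*s+1 ≤ (univ.filter (fun v : Fin ((s+3)*(s-1)+R) =>
      ∀ τ ∈ T, (rowPerm s R hs f v).symm (ρ s i) < (rowPerm s R hs f v).symm τ)).card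
      + T.card := by
  classical
  have hq2 : 2 ≤ q := by omega
  set σ := ρ s i with hσ
  set G := univ.filter (fun v : Fin ((s+3)*(s-1)+R) =>
      ∀ τ ∈ T, (rowPerm s R hs f v).symm σ < (rowPerm s R hs f v).symm τ) with hG
  set Un := univ.filter (fun z : Fin s => ν s z ∉ T) with hUn
  obtain ⟨Ed, hEd, hEdcard⟩ := forest f i (q-1) Un
    (fun S hS hmono => by
      have := hf i S hmono
      omega)
  set B1 := (univ : Finset (Fin s)).image (fun y => encB s R hs hR i y) with hB1
  set B2 := (Finset.range q).image (fun t => encC s R hs hR (3*t + i.1)) with hB2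
  set B3 := Ed.image (fun p => if g s f p.1 p.2 = i then encA s R hs p.1 p.2
      else encA s R hs p.2 p.1) with hB3
  have hjlt : ∀ t, t < q → 3*t + i.1 < R - 3 := by
    intro t ht
    have := i.2
    omega
  have hsubG : B1 ∪ B2 ∪ B3 ⊆ G := by
    intro v hv
    rw [Finset.mem_union, Finset.mem_union] at hv
    rw [hG, Finset.mem_filter]
    refine ⟨Finset.mem_univ _, ?_⟩
    rcases hv with (hv | hv) | hv
    · obtain ⟨y, hy, rfl⟩ := Finset.mem_image.mp hv
      obtain ⟨e0, e1⟩ := rowPerm_encB s R hs hR f i y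
      intro τ hτ
      exact good_head e0 (fun hc => hσT (hc ▸ hτ))
    · obtain ⟨t, ht, rfl⟩ := Finset.mem_image.mp hv
      rw [Finset.mem_range] at ht
      have e0 := rowPerm_encC s R hs hR f (3*t + i.1) (hjlt t ht)
      have hmod : (3*t + i.1) % 3 = i.1 := by omega
      have e0' : (rowPerm s R hs f (encC s R hs hR (3*t + i.1))) p0 = σ := by
        rw [e0, hσ]
        exact congrArg (ρ s) (Fin.ext hmod)
      intro τ hτ
      exact good_head e0' (fun hc => hσT (hc ▸ hτ))
    · obtain ⟨p, hp, rfl⟩ := Finset.mem_image.mp hv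
      obtain ⟨hp1, hp2, hplt, hpf⟩ := hEd p hp
      rw [hUn, Finset.mem_filter] at hp1 hp2
      have hp1T := hp1.2
      have hp2T := hp2.2
      have hne : p.1 ≠ p.2 := Fin.ne_of_lt hplt
      have horien : g s f p.1 p.2 = i ∨ g s f p.2 p.1 = i := by
        rw [g_lt s f hplt, g_gt s f hplt]
        rcases fin3_cover (f p.1 p.2) i (Ne.symm hpf) with h | h
        · exact Or.inl h
        · exact Or.inr h
      intro τ hτ
      by_cases hgi : g s f p.1 p.2 = i
      · rw [if_pos hgi]
        obtain ⟨e0, e1, e2⟩ := rowPerm_encA s R hs f p.1 p.2 hne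
        rw [hgi] at e2
        exact good_third e0 e1 e2 (fun hc => hp1T (hc ▸ hτ)) (fun hc => hp2T (hc ▸ hτ))
          (fun hc => hσT (hc ▸ hτ))
      · rw [if_neg hgi]
        have hgi2 : g s f p.2 p.1 = i := by tauto
        obtain ⟨e0, e1, e2⟩ := rowPerm_encA s R hs f p.2 p.1 (Ne.symm hne)
        rw [hgi2] at e2
        exact good_third e0 e1 e2 (fun hc => hp2T (hc ▸ hτ)) (fun hc => hp1T (hc ▸ hτ))
          (fun hc => hσT (hc ▸ hτ))
  have hcard1 : B1.card = s := by
    rw [hB1, Finset.card_image_of_injOn, Finset.card_univ, Fintype.card_fin]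
    intro y₁ _ y₂ _ h
    exact (encB_inj s R hs hR h).2
  have hcard2 : B2.card = q := by
    rw [hB2, Finset.card_image_of_injOn, Finset.card_range]
    intro t₁ h₁ t₂ h₂ h
    simp only [Finset.coe_range, Set.mem_Iio] at h₁ h₂
    have hv := congrArg (fun t : Fin ((s+3)*(s-1)+R) => t.1) h
    simp only [encC] at hv
    have e1 : (3*t₁ + i.1) % (R-3) = 3*t₁ + i.1 := Nat.mod_eq_of_lt (hjlt t₁ h₁)
    have e2 : (3*t₂ + i.1) % (R-3) = 3*t₂ + i.1 := Nat.mod_eq_of_lt (hjlt t₂ h₂)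
    omega
  have hcard3 : B3.card = Ed.card := by
    rw [hB3, Finset.card_image_of_injOn]
    intro a ha b hb h
    obtain ⟨ha1, ha2, halt, _⟩ := hEd a ha
    obtain ⟨hb1, hb2, hblt, _⟩ := hEd b hb
    have hane : a.1 ≠ a.2 := Fin.ne_of_lt halt
    have hbne : b.1 ≠ b.2 := Fin.ne_of_lt hblt
    simp only at h
    split_ifs at h with h1 h2 h2
    · obtain ⟨e1, e2⟩ := encA_inj s R hs (Ne.symm hane) (Ne.symm hbne) h
      exact Prod.ext e1 e2
    · obtain ⟨e1, e2⟩ := encA_inj s R hs (Ne.symm hane) hbne h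
      rw [Fin.lt_def] at halt hblt
      rw [Fin.ext_iff] at e1 e2
      omega
    · obtain ⟨e1, e2⟩ := encA_inj s R hs hane (Ne.symm hbne) h
      rw [Fin.lt_def] at halt hblt
      rw [Fin.ext_iff] at e1 e2
      omega
    · obtain ⟨e1, e2⟩ := encA_inj s R hs hane hbne h
      exact Prod.ext e2 e1
  have hd12 : Disjoint B1 B2 := by
    rw [Finset.disjoint_left]
    intro v hv1 hv2
    obtain ⟨y, _, he1⟩ := Finset.mem_image.mp hv1
    obtain ⟨t, _, he2⟩ := Finset.mem_image.mp hv2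
    have r1 := (encB_range s R hs hR i y).2
    have r2 := encC_range s R hs hR (3*t + i.1)
    rw [he1] at r1
    rw [he2] at r2
    omega
  have hd123 : Disjoint (B1 ∪ B2) B3 := by
    rw [Finset.disjoint_left]
    intro v hv1 hv3
    obtain ⟨p, hp, he3⟩ := Finset.mem_image.mp hv3
    have h4 : v.1 < s*(s-1) := by
      rw [← he3]
      split_ifs
      · exact encA_lt s R hs p.1 p.2
      · exact encA_lt s R hs p.2 p.1
    rw [Finset.mem_union] at hv1
    rcases hv1 with hv | hv
    · obtain ⟨y, _, he1⟩ := Finset.mem_image.mp hv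
      have r1 := (encB_range s R hs hR i y).1
      rw [he1] at r1
      omega
    · obtain ⟨t, _, he2⟩ := Finset.mem_image.mp hv
      have r2 := encC_range s R hs hR (3*t + i.1)
      rw [he2] at r2
      omega
  have hGcard : s + q + Ed.card ≤ G.card := by
    calc s + q + Ed.card = (B1 ∪ B2 ∪ B3).card := by
          rw [Finset.card_union_of_disjoint hd123, Finset.card_union_of_disjoint hd12,
            hcard1, hcard2, hcard3]
      _ ≤ G.card := Finset.card_le_card hsubG
  -- counts
  have hcn : Un.card + (univ.filter (fun z : Fin s => ν s z ∈ T)).card = s := by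
    rw [hUn, add_comm, Finset.card_filter_add_card_filter_not, Finset.card_univ,
      Fintype.card_fin]
  have hTb : (univ.filter (fun z : Fin s => ν s z ∈ T)).card ≤ T.card := by
    calc (univ.filter (fun z : Fin s => ν s z ∈ T)).card
        = ((univ.filter (fun z : Fin s => ν s z ∈ T)).image (ν s)).card :=
          (Finset.card_image_of_injective _ (ν_injective s)).symm
      _ ≤ T.card := by
          apply Finset.card_le_card
          intro τ hτ
          obtain ⟨z, hz, rfl⟩ := Finset.mem_image.mp hτ
          exact (Finset.mem_filter.mp hz).2
  omega

end rowperm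



def pairsS {n : ℕ} (S : Finset (Fin n)) : Finset (Fin n × Fin n) :=
  S.offDiag.filter (fun p => p.1 < p.2)

lemma pairsS_card {n k : ℕ} (S : Finset (Fin n)) (hS : S.card = k) :
    (pairsS S).card = k * (k-1) / 2 := by
  classical
  have hswap : (S.offDiag.filter (fun p => p.1 < p.2)).card
      = (S.offDiag.filter (fun p => p.2 < p.1)).card := by
    apply Finset.card_bij (fun p _ => Prod.swap p)
    · intro p hp
      simp only [mem_filter, Finset.mem_offDiag] at hp ⊢
      exact ⟨⟨hp.1.2.1, hp.1.1, fun h => hp.1.2.2 h.symm⟩, hp.2⟩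
    · intro p hp q hq h
      exact Prod.swap_injective h
    · intro p hp
      refine ⟨Prod.swap p, ?_, by simp⟩
      simp only [mem_filter, Finset.mem_offDiag] at hp ⊢
      exact ⟨⟨hp.1.2.1, hp.1.1, fun h => hp.1.2.2 h.symm⟩, hp.2⟩
  have hsplit : (S.offDiag.filter (fun p => p.1 < p.2)).card
      + (S.offDiag.filter (fun p => p.2 < p.1)).card = S.offDiag.card := by
    rw [← Finset.card_union_of_disjoint]
    · congr 1
      apply Finset.ext
      intro p
      simp only [Finset.mem_union, mem_filter, Finset.mem_offDiag]
      constructor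
      · rintro (⟨h, _⟩ | ⟨h, _⟩) <;> exact h
      · intro h
        rcases lt_or_gt_of_ne (h.2.2 : p.1 ≠ p.2) with hlt | hgt
        · exact Or.inl ⟨h, hlt⟩
        · exact Or.inr ⟨h, hgt⟩
    · rw [Finset.disjoint_filter]
      intro p _ h1 h2
      exact absurd h1 (not_lt.mpr (le_of_lt h2))
  have hod : S.offDiag.card = k * k - k := by rw [Finset.offDiag_card, hS]
  have hkk : k * (k - 1) = k * k - k := by rw [Nat.mul_sub_one, Nat.mul_comm]
  have h2 : 2 * (pairsS S).card = k * (k - 1) := by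
    have heq : (pairsS S).card + (pairsS S).card = k * k - k := by
      have := hswap
      rw [show (pairsS S) = S.offDiag.filter (fun p => p.1 < p.2) from rfl]
      omega
    omega
  omega


lemma mono_card_le {n k : ℕ} (S : Finset (Fin n)) (hS : S.card = k) (c : Fin 3) :
    ((Finset.univ : Finset (Fin n → Fin n → Fin 3)).filter
      (fun f => ∀ a ∈ S, ∀ b ∈ S, a < b → f a b = c)).card
      ≤ 3 ^ (n * n - k * (k-1) / 2) := by
  classical
  have hsubc : Fintype.card {p : Fin n × Fin n // p ∉ pairsS S} = n * n - k * (k-1) / 2 := by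
    rw [Fintype.card_subtype_compl, Fintype.card_prod, Fintype.card_fin, Fintype.card_coe,
      pairsS_card S hS]
  have hcard : Fintype.card ({p : Fin n × Fin n // p ∉ pairsS S} → Fin 3)
      = 3 ^ (n * n - k * (k-1) / 2) := by
    rw [Fintype.card_fun, hsubc, Fintype.card_fin]
  calc ((Finset.univ : Finset (Fin n → Fin n → Fin 3)).filter
      (fun f => ∀ a ∈ S, ∀ b ∈ S, a < b → f a b = c)).card
      ≤ (Finset.univ : Finset ({p : Fin n × Fin n // p ∉ pairsS S} → Fin 3)).card := by
        apply Finset.card_le_card_of_injOn (fun f => fun p => f p.1.1 p.1.2)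
        · intro f _; exact Finset.mem_univ _
        · intro f hf g hg hfg
          simp only [Finset.coe_filter, Set.mem_setOf_eq] at hf hg
          funext a b
          by_cases hp : (a, b) ∈ pairsS S
          · simp only [pairsS, Finset.mem_filter, Finset.mem_offDiag] at hp
            rw [hf.2 a hp.1.1 b hp.1.2.1 hp.2, hg.2 a hp.1.1 b hp.1.2.1 hp.2]
          · exact congrFun hfg ⟨(a, b), hp⟩
    _ = 3 ^ (n * n - k * (k-1) / 2) := by rw [Finset.card_univ, hcard]

lemma exists_coloring (n k : ℕ) (hcnt : 3 * n ^ k < 3 ^ (k * (k-1) / 2)) :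
    ∃ f : Fin n → Fin n → Fin 3, ∀ (c : Fin 3) (S : Finset (Fin n)),
      (∀ a ∈ S, ∀ b ∈ S, a < b → f a b = c) → S.card < k := by
  classical
  rcases le_or_gt k n with hkn | hkn
  swap
  · exact ⟨fun _ _ => 0, fun c S _ => lt_of_le_of_lt (by
      simpa using Finset.card_le_card (Finset.subset_univ S)) hkn⟩
  set Bad : (Fin n → Fin n → Fin 3) → Prop :=
    fun f => ∃ S : Finset (Fin n), S.card = k ∧ ∃ c : Fin 3,
      ∀ a ∈ S, ∀ b ∈ S, a < b → f a b = c with hBad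
  have hKle : k * (k-1) / 2 ≤ n * n := by
    have h1 : k * (k-1) ≤ n * n := Nat.mul_le_mul hkn (le_trans (Nat.sub_le _ _) hkn)
    omega
  have hfin : (n.choose k * 3) * 3 ^ (n * n - k * (k-1) / 2) < 3 ^ (n * n) := by
    have h1 : n.choose k * 3 * 3 ^ (n * n - k * (k-1) / 2)
        ≤ 3 * n ^ k * 3 ^ (n * n - k * (k-1) / 2) := by
      apply Nat.mul_le_mul_right
      calc n.choose k * 3 ≤ n ^ k * 3 := Nat.mul_le_mul_right _ (Nat.choose_le_pow _ _)
        _ = 3 * n ^ k := Nat.mul_comm _ _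
    have h2 : 3 * n ^ k * 3 ^ (n * n - k * (k-1) / 2)
        < 3 ^ (k * (k-1) / 2) * 3 ^ (n * n - k * (k-1) / 2) :=
      mul_lt_mul_of_pos_right hcnt (Nat.pow_pos (by norm_num))
    have h3 : 3 ^ (k * (k-1) / 2) * 3 ^ (n * n - k * (k-1) / 2) = 3 ^ (n * n) := by
      rw [← pow_add]
      congr 1
      omega
    omega
  have hbound : (Finset.univ.filter Bad).card
      < Fintype.card (Fin n → Fin n → Fin 3) := by
    have hsub : (Finset.univ.filter Bad) ⊆
        ((Finset.univ.powersetCard k (α := Fin n)) ×ˢ (Finset.univ : Finset (Fin 3))).biUnion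
          (fun Sc => Finset.univ.filter
            (fun f : Fin n → Fin n → Fin 3 => ∀ a ∈ Sc.1, ∀ b ∈ Sc.1, a < b → f a b = Sc.2)) := by
      intro f hf
      rw [Finset.mem_filter] at hf
      obtain ⟨S, hScard, c, hmono⟩ := hf.2
      refine Finset.mem_biUnion.mpr ⟨(S, c), ?_, ?_⟩
      · rw [Finset.mem_product]
        exact ⟨Finset.mem_powersetCard.mpr ⟨Finset.subset_univ _, hScard⟩, Finset.mem_univ _⟩
      · exact Finset.mem_filter.mpr ⟨Finset.mem_univ _, hmono⟩
    have hcfun : Fintype.card (Fin n → Fin n → Fin 3) = 3 ^ (n * n) := by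
      rw [Fintype.card_fun, Fintype.card_fun, Fintype.card_fin, Fintype.card_fin, ← pow_mul]
    calc (Finset.univ.filter Bad).card
        ≤ _ := Finset.card_le_card hsub
      _ ≤ ∑ Sc ∈ ((Finset.univ.powersetCard k (α := Fin n)) ×ˢ (Finset.univ : Finset (Fin 3))),
            (Finset.univ.filter
              (fun f : Fin n → Fin n → Fin 3 => ∀ a ∈ Sc.1, ∀ b ∈ Sc.1, a < b → f a b = Sc.2)).card :=
          Finset.card_biUnion_le
      _ ≤ ∑ _Sc ∈ ((Finset.univ.powersetCard k (α := Fin n)) ×ˢ (Finset.univ : Finset (Fin 3))),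
            3 ^ (n * n - k * (k-1) / 2) := by
          apply Finset.sum_le_sum
          intro Sc hSc
          rw [Finset.mem_product, Finset.mem_powersetCard] at hSc
          exact mono_card_le Sc.1 hSc.1.2 Sc.2
      _ = (n.choose k * 3) * 3 ^ (n * n - k * (k-1) / 2) := by
          rw [Finset.sum_const, smul_eq_mul, Finset.card_product, Finset.card_powersetCard]
          simp
      _ < Fintype.card (Fin n → Fin n → Fin 3) := by rw [hcfun]; exact hfin
  have : ∃ f : Fin n → Fin n → Fin 3, ¬ Bad f := by
    by_contra h
    push_neg at h
    have : Finset.univ.filter Bad = Finset.univ := by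
      apply Finset.eq_univ_of_forall
      intro f
      exact Finset.mem_filter.mpr ⟨Finset.mem_univ _, h f⟩
    rw [this, Finset.card_univ] at hbound
    exact lt_irrefl _ hbound
  obtain ⟨f, hf⟩ := this
  refine ⟨f, fun c S hmono => ?_⟩
  by_contra hge
  push_neg at hge
  obtain ⟨S', hS'sub, hS'card⟩ := Finset.exists_subset_card_eq hge
  exact hf ⟨S', hS'card, c, fun a ha b hb hab => hmono a (hS'sub ha) b (hS'sub hb) hab⟩



lemma log3_bounds : (1.0952:ℝ) ≤ Real.log 3 ∧ Real.log 3 ≤ 1.1031 := by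
  have l2u : Real.log 2 < 0.6931471808 := Real.log_two_lt_d9
  have l2l : (0.6931471803:ℝ) < Real.log 2 := Real.log_two_gt_d9
  have h9 : Real.log 9 = 2 * Real.log 3 := by
    rw [show (9:ℝ) = 3^2 by norm_num, Real.log_pow]
    push_cast; ring
  have h98 : Real.log (9/8) = Real.log 9 - Real.log 8 :=
    Real.log_div (by norm_num) (by norm_num)
  have h8 : Real.log 8 = 3 * Real.log 2 := by
    rw [show (8:ℝ) = 2^3 by norm_num, Real.log_pow]
    push_cast; ring
  have hg8l : (1/9:ℝ) ≤ Real.log (9/8) := by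
    have h1 := Real.log_le_sub_one_of_pos (show (0:ℝ) < 8/9 by norm_num)
    have h2 : Real.log (9/8) = - Real.log (8/9) := by
      rw [← Real.log_inv]
      norm_num
    rw [h2]
    linarith
  have hg8u : Real.log (9/8) ≤ 1/8 := by
    have h1 := Real.log_le_sub_one_of_pos (show (0:ℝ) < 9/8 by norm_num)
    linarith
  constructor <;> nlinarith [h9, h98, h8]

lemma key_ineq (s q R : ℕ) (τ : ℝ) (hτ : 4 / Real.log 2 ≤ τ)
    (hlog : 100 ≤ Real.log s) (hRc : τ * Real.log s ≤ (R:ℝ)) (h3q : R ≤ 3*q + 5) :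
    2*Real.log s + 3*Real.log 3 ≤ (q:ℝ)*Real.log 3 := by
  obtain ⟨l3l, l3u⟩ := log3_bounds
  have l2u : Real.log 2 < 0.6931471808 := Real.log_two_lt_d9
  have l2l : (0.6931471803:ℝ) < Real.log 2 := Real.log_two_gt_d9
  have hl2pos : (0:ℝ) < Real.log 2 := by linarith
  have hl3pos : (0:ℝ) < Real.log 3 := by linarith
  have hlns0 : (0:ℝ) ≤ Real.log s := by linarith
  have h1 : 4 / Real.log 2 * Real.log s ≤ (R:ℝ) :=
    le_trans (mul_le_mul_of_nonneg_right hτ hlns0) hRc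
  have h2 : 4 * Real.log s / Real.log 2 ≤ (R:ℝ) := by
    rw [div_mul_eq_mul_div] at h1
    exact h1
  have h45 : 4 * Real.log s ≤ (R:ℝ) * Real.log 2 := (div_le_iff₀ hl2pos).mp h2
  have hcast : (R:ℝ) ≤ 3*(q:ℝ) + 5 := by exact_mod_cast h3q
  have h46 : 4 * Real.log s ≤ (3*(q:ℝ)+5) * Real.log 2 := by
    calc 4 * Real.log s ≤ (R:ℝ) * Real.log 2 := h45
      _ ≤ (3*(q:ℝ)+5) * Real.log 2 := mul_le_mul_of_nonneg_right hcast (le_of_lt hl2pos)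
  have hA : (4*Real.log s) * Real.log 3 ≤ ((3*(q:ℝ)+5)*Real.log 2) * Real.log 3 :=
    mul_le_mul_of_nonneg_right h46 (le_of_lt hl3pos)
  have c3 : (20:ℝ) ≤ Real.log s * (4*Real.log 3 - 6*Real.log 2) := by
    have c1 : (0.2:ℝ) ≤ 4*Real.log 3 - 6*Real.log 2 := by linarith
    nlinarith
  have c2 : Real.log 2 * Real.log 3 ≤ (0.765:ℝ) := by nlinarith
  have hB : 3*Real.log 2*((q:ℝ)*Real.log 3) ≥ 3*Real.log 2*(2*Real.log s + 3*Real.log 3) := by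
    nlinarith [hA, c3, c2]
  have := le_of_mul_le_mul_left (by linarith : 3*Real.log 2*(2*Real.log s + 3*Real.log 3)
      ≤ 3*Real.log 2*((q:ℝ)*Real.log 3)) (by linarith : (0:ℝ) < 3*Real.log 2)
  linarith

lemma pow_ineq (s q : ℕ) (hs : 2 ≤ s) (hq3 : 3 ≤ q)
    (key : 2*Real.log s + 3*Real.log 3 ≤ (q:ℝ)*Real.log 3) :
    3 * s^q < 3^(q*(q-1)/2) := by
  have hK2 : 2*(q*(q-1)/2) = q*(q-1) := by
    have he : Even ((q-1)*(q-1+1)) := Nat.even_mul_succ_self (q-1)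
    have he2 : Even (q*(q-1)) := by
      have : (q-1)*(q-1+1) = q*(q-1) := by
        have : q - 1 + 1 = q := by omega
        rw [this, Nat.mul_comm]
      rwa [this] at he
    obtain ⟨m, hm⟩ := he2
    omega
  set K := q*(q-1)/2 with hKdef
  have hlog3pos : (0:ℝ) < Real.log 3 := Real.log_pos (by norm_num)
  have hlnspos : (0:ℝ) ≤ Real.log s := Real.log_nonneg (by exact_mod_cast Nat.one_le_of_lt hs)
  have hKr : ((K:ℕ):ℝ) = (q:ℝ)*((q:ℝ)-1)/2 := by
    have h2K : ((2*K : ℕ):ℝ) = ((q*(q-1) : ℕ):ℝ) := by rw [hK2]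
    push_cast [Nat.cast_sub (show 1 ≤ q by omega)] at h2K
    linarith
  have hmain : Real.log 3 + (q:ℝ)*Real.log s < (K:ℝ)*Real.log 3 := by
    have key2 : Real.log s + Real.log 3 ≤ ((q:ℝ)-1)/2 * Real.log 3 := by linarith
    have hq0 : (0:ℝ) ≤ (q:ℝ) := by positivity
    have key3 : (q:ℝ)*(Real.log s + Real.log 3) ≤ (q:ℝ)*(((q:ℝ)-1)/2*Real.log 3) :=
      mul_le_mul_of_nonneg_left key2 hq0
    have hq3' : (3:ℝ) ≤ (q:ℝ) := by exact_mod_cast hq3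
    have hKe : (K:ℝ)*Real.log 3 = (q:ℝ)*(((q:ℝ)-1)/2*Real.log 3) := by
      rw [hKr]; ring
    nlinarith
  have hlt : (3:ℝ)*(s:ℝ)^q < (3:ℝ)^K := by
    have hlhs_pos : (0:ℝ) < 3*(s:ℝ)^q := by positivity
    have hlog_lhs : Real.log (3*(s:ℝ)^q) = Real.log 3 + (q:ℝ)*Real.log s := by
      rw [Real.log_mul (by norm_num) (by positivity), Real.log_pow]
    have hlog_rhs : Real.log ((3:ℝ)^K) = (K:ℝ)*Real.log 3 := by rw [Real.log_pow]
    calc (3:ℝ)*(s:ℝ)^q = Real.exp (Real.log (3*(s:ℝ)^q)) := (Real.exp_log hlhs_pos).symm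
      _ < Real.exp (Real.log ((3:ℝ)^K)) := by
          apply Real.exp_lt_exp.mpr
          rw [hlog_lhs, hlog_rhs]; exact hmain
      _ = (3:ℝ)^K := Real.exp_log (by positivity)
  exact_mod_cast hlt

end SC




/-- An `(N, w, t)`-suitable core: an `N × w` array whose rows are permutations of `{1,…,w}`
(row `i`, position `j` holds symbol `C i j`) such that for each `s` with `0 ≤ s ≤ t−1`,
each symbol precedes each set of `s` other symbols in at least `t − s` rows. -/
def IsSuitableCore (N w t : ℕ) (C : Fin N → Equiv.Perm (Fin w)) : Prop :=
  ∀ (σ : Fin w) (T : Finset (Fin w)), σ ∉ T → T.card < t →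
    t - T.card ≤ (Finset.univ.filter fun i : Fin N =>
      ∀ τ ∈ T, (C i).symm σ < (C i).symm τ).card

def SuitableCoreExists (N w t : ℕ) : Prop :=
  ∃ C : Fin N → Equiv.Perm (Fin w), IsSuitableCore N w t C

/-- For each constant `τ ≥ 4 / ln 2` there exists `s₀ = s₀(τ)` such that an
`((s+3)(s−1) + ⌈τ ln s⌉, s+3, 2s+1)`-suitable core exists for all `s ≥ s₀`. -/
theorem stmt0 (τ : ℝ) (hτ : 4 / Real.log 2 ≤ τ) :
    ∃ s₀ : ℕ, ∀ s : ℕ, s₀ ≤ s →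
      SuitableCoreExists ((s + 3) * (s - 1) + ⌈τ * Real.log s⌉₊) (s + 3) (2 * s + 1) := by
  classical
  refine ⟨⌈Real.exp 100⌉₊ + 2, fun s hs => ?_⟩
  have hs2 : 2 ≤ s := le_trans (by omega) hs
  have hse : Real.exp 100 ≤ (s:ℝ) := by
    calc Real.exp 100 ≤ (⌈Real.exp 100⌉₊ : ℝ) := Nat.le_ceil _
      _ ≤ (s:ℝ) := by exact_mod_cast le_trans (by omega) hs
  have hlog : 100 ≤ Real.log s := by
    have := Real.log_le_log (Real.exp_pos 100) hse
    rwa [Real.log_exp] at this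
  set R := ⌈τ * Real.log (s:ℝ)⌉₊ with hRdef
  have hRc : τ * Real.log s ≤ (R:ℝ) := Nat.le_ceil _
  have l2u : Real.log 2 < 0.6931471808 := Real.log_two_lt_d9
  have hl2pos : (0:ℝ) < Real.log 2 := lt_trans (by norm_num) Real.log_two_gt_d9
  have hτ5 : (5:ℝ) ≤ τ := by
    have h54 : (5:ℝ) ≤ 4 / Real.log 2 := by
      rw [le_div_iff₀ hl2pos]
      nlinarith
    linarith
  have hR500 : (500:ℝ) ≤ (R:ℝ) := by
    have h5 : (500:ℝ) ≤ τ * Real.log s := by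
      nlinarith [mul_le_mul hτ5 hlog (by norm_num : (0:ℝ) ≤ 100) (by linarith : (0:ℝ) ≤ τ)]
    linarith
  have hR500n : 500 ≤ R := by exact_mod_cast hR500
  have hR9 : 9 ≤ R := by omega
  set q := (R - 3)/3 with hq
  have hq3 : 3 ≤ q := by omega
  have h3q : R ≤ 3*q + 5 := by omega
  have hcnt : 3 * s^q < 3^(q*(q-1)/2) :=
    SC.pow_ineq s q hs2 hq3 (SC.key_ineq s q R τ hτ hlog hRc h3q)
  obtain ⟨f, hf⟩ := SC.exists_coloring s q hcnt
  refine ⟨SC.rowPerm s R hs2 f, ?_⟩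
  intro σ T hσT hT
  rw [Nat.sub_le_iff_le_add]
  by_cases hv : σ.1 < s
  · have hσ : σ = SC.ν s ⟨σ.1, hv⟩ := Fin.ext rfl
    rw [hσ] at hσT ⊢
    exact SC.main_normal s R hs2 hR9 f T ⟨σ.1, hv⟩ hσT
  · have hv2 : σ.1 - s < 3 := by have := σ.2; omega
    have hσ : σ = SC.ρ s ⟨σ.1 - s, hv2⟩ := Fin.ext (by simp [SC.ρ]; omega)
    rw [hσ] at hσT ⊢
    exact SC.main_rich s R hs2 hR9 f q hq hf T ⟨σ.1 - s, hv2⟩ hσT
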